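/- Every finitely generated residually finite group is Hopfian: if G is a finitely generated residually finite group, then every surjective group homomorphism φ : G → G is injective (hence an isomorphism). -/
import Mathlib

/-- Every finitely generated residually finite group is Hopfian. -/
theorem fg_residually_finite_hopfian (G : Type*) [Group G] [Group.FG G]
    (hrf : ∀ g : G, g ≠ 1 → ∃ (H : Type) (_ : Group H) (_ : Finite H) (φ : G →* H), φ g ≠ 1)
    (φ : G →* G) (hφ : Function.Surjective φ) : Function.Injective φ := by
  rw [injective_iff_map_eq_one]
  intro g hg
  by_contra hg1
  obtain ⟨H, _, _, ψ, hψ⟩ := hrf g hg1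
  obtain ⟨S, hS⟩ := Group.FG.out (G := G)
  -- Hom(G, H) is finite
  have hfin : Finite (G →* H) := by
    have : Function.Injective (fun f : G →* H => (fun s : S => f s)) := by
      intro f g h
      refine MonoidHom.eq_of_eqOn_dense hS ?_
      intro x hx
      exact congrFun h ⟨x, hx⟩
    exact Finite.of_injective _ this
  -- precomposition with φ is injective, hence surjective
  have hinj : Function.Injective (fun f : G →* H => f.comp φ) := by
    intro f g h
    ext x
    obtain ⟨y, rfl⟩ := hφ x
    exact DFunLike.congr_fun h y
  obtain ⟨ψ', hψ'⟩ := Finite.injective_iff_surjective.mp hinj ψ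
  apply hψ
  calc ψ g = (ψ'.comp φ) g := by rw [show ψ'.comp φ = ψ from hψ']
    _ = ψ' (φ g) := rfl
    _ = 1 := by rw [hg, map_one]
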